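/- For any n ≥ 1 and any finite sequence (x_i) of n×n complex matrices, ‖∑_i x_i* x_i‖ ≤ n ‖∑_i x_i x_i*‖, where ‖·‖ is the operator norm. Consequently η(M_n) ≤ √n, where η(M_n) is the maximum over the two suprema: sup over (x_i) with ‖∑ x_i* x_i‖ ≤ 1 of ‖∑ x_i x_i*‖^{1/2}, and the symmetric quantity with the roles of x_i x_i* and x_i* x_i exchanged. -/

import Mathlib

set_option maxHeartbeats 1000000

open Matrix

open scoped InnerProductSpace in
lemma key_op_ineq (n : ℕ) (ι : Type) [Fintype ι]
    (a : ι → (EuclideanSpace ℂ (Fin n) →L[ℂ] EuclideanSpace ℂ (Fin n))) :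
    ‖∑ i, star (a i) * a i‖ ≤ n * ‖∑ i, a i * star (a i)‖ := by
  set E := EuclideanSpace ℂ (Fin n)
  set S : E →L[ℂ] E := ∑ i, star (a i) * a i with hS
  set P : E →L[ℂ] E := ∑ i, a i * star (a i) with hP
  set c : ℝ := n * ‖P‖ with hc
  have hc0 : 0 ≤ c := by positivity
  -- quadratic forms
  have hSq : ∀ v : E, RCLike.re ⟪S v, v⟫_ℂ = ∑ i, ‖a i v‖ ^ 2 := by
    intro v
    rw [hS, ContinuousLinearMap.sum_apply, sum_inner, map_sum]
    refine Finset.sum_congr rfl fun i _ => ?_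
    rw [ContinuousLinearMap.mul_apply, ContinuousLinearMap.star_eq_adjoint,
      ContinuousLinearMap.adjoint_inner_left, inner_self_eq_norm_sq]
  have hPq : ∀ v : E, RCLike.re ⟪P v, v⟫_ℂ = ∑ i, ‖star (a i) v‖ ^ 2 := by
    intro v
    rw [hP, ContinuousLinearMap.sum_apply, sum_inner, map_sum]
    refine Finset.sum_congr rfl fun i _ => ?_
    rw [ContinuousLinearMap.mul_apply]
    conv_lhs => rw [ContinuousLinearMap.star_eq_adjoint,
      ← ContinuousLinearMap.adjoint_inner_right (a i)]
    rw [← ContinuousLinearMap.star_eq_adjoint, inner_self_eq_norm_sq]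
  -- the key pointwise bound
  have hbound : ∀ v : E, RCLike.re ⟪S v, v⟫_ℂ ≤ c * ‖v‖ ^ 2 := by
    intro v
    rw [hSq]
    have h1 : ∀ i, ‖a i v‖ ^ 2 = ∑ j : Fin n, ‖a i v j‖ ^ 2 := by
      intro i
      rw [EuclideanSpace.norm_eq, Real.sq_sqrt (by positivity)]
    calc ∑ i, ‖a i v‖ ^ 2
        = ∑ j : Fin n, ∑ i, ‖a i v j‖ ^ 2 := by
          rw [Finset.sum_comm]; exact Finset.sum_congr rfl fun i _ => h1 i
      _ ≤ ∑ j : Fin n, ‖P‖ * ‖v‖ ^ 2 := by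
          refine Finset.sum_le_sum fun j _ => ?_
          have h2 : ∀ i, ‖a i v j‖ ^ 2 ≤ ‖star (a i) (EuclideanSpace.single j 1)‖ ^ 2 * ‖v‖ ^ 2 := by
            intro i
            have : a i v j = ⟪star (a i) (EuclideanSpace.single j (1:ℂ)), v⟫_ℂ := by
              rw [ContinuousLinearMap.star_eq_adjoint,
                ContinuousLinearMap.adjoint_inner_left,
                EuclideanSpace.inner_single_left]
              simp
            rw [this, ← mul_pow]
            gcongr
            exact norm_inner_le_norm _ _
          calc ∑ i, ‖a i v j‖ ^ 2
              ≤ ∑ i, ‖star (a i) (EuclideanSpace.single j 1)‖ ^ 2 * ‖v‖ ^ 2 :=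
                Finset.sum_le_sum fun i _ => h2 i
            _ = (RCLike.re ⟪P (EuclideanSpace.single j 1), (EuclideanSpace.single j (1:ℂ))⟫_ℂ)
                  * ‖v‖ ^ 2 := by rw [← Finset.sum_mul, hPq]
            _ ≤ ‖P‖ * ‖v‖ ^ 2 := by
                gcongr
                calc RCLike.re ⟪P (EuclideanSpace.single j 1), (EuclideanSpace.single j (1:ℂ))⟫_ℂ
                    ≤ ‖⟪P (EuclideanSpace.single j 1), (EuclideanSpace.single j (1:ℂ))⟫_ℂ‖ :=
                      RCLike.re_le_norm _
                  _ ≤ ‖P (EuclideanSpace.single j 1)‖ * ‖EuclideanSpace.single j (1:ℂ)‖ :=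
                      norm_inner_le_norm _ _
                  _ ≤ (‖P‖ * ‖EuclideanSpace.single j (1:ℂ)‖) * ‖EuclideanSpace.single j (1:ℂ)‖ :=
                      mul_le_mul_of_nonneg_right (P.le_opNorm _) (norm_nonneg _)
                  _ = ‖P‖ := by rw [EuclideanSpace.norm_single, norm_one, mul_one, mul_one]
      _ = c * ‖v‖ ^ 2 := by rw [Finset.sum_const, Finset.card_univ, Fintype.card_fin,
            nsmul_eq_mul, hc]; ring
  -- S is nonneg, and S ≤ c • 1
  have hS0 : (0 : E →L[ℂ] E) ≤ S := Finset.sum_nonneg fun i _ => star_mul_self_nonneg (a i)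
  have hSsa : IsSelfAdjoint S :=
    ((ContinuousLinearMap.nonneg_iff_isPositive S).mp hS0).isSelfAdjoint
  have hle : S ≤ c • (1 : E →L[ℂ] E) := by
    rw [ContinuousLinearMap.le_def]
    constructor
    · rw [RCLike.real_smul_eq_coe_smul (K := ℂ) c (1 : E →L[ℂ] E)]
      rw [← ContinuousLinearMap.isSelfAdjoint_iff_isSymmetric]
      exact (IsSelfAdjoint.smul (show _root_.IsSelfAdjoint (c : ℂ) from Complex.conj_ofReal c) (show _root_.IsSelfAdjoint (1 : E →L[ℂ] E) from star_one _)).sub hSsa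
    · intro v
      rw [ContinuousLinearMap.reApplyInnerSelf]
      have : ((c • (1 : E →L[ℂ] E)) - S) v = c • v - S v := by
        simp [ContinuousLinearMap.sub_apply]
      rw [this, inner_sub_left, map_sub, RCLike.real_smul_eq_coe_smul (K := ℂ),
        inner_smul_left, inner_self_eq_norm_sq_to_K]
      have h := hbound v
      simp only [RCLike.conj_ofReal, ← RCLike.ofReal_pow, ← RCLike.ofReal_mul,
        RCLike.ofReal_re]
      linarith
  calc ‖S‖ ≤ ‖c • (1 : E →L[ℂ] E)‖ :=
        CStarAlgebra.norm_le_norm_of_nonneg_of_le hS0 hle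
    _ ≤ ‖c‖ * ‖(1 : E →L[ℂ] E)‖ := norm_smul_le c (1 : E →L[ℂ] E)
    _ ≤ c * 1 := by
        rw [Real.norm_eq_abs, abs_of_nonneg hc0]
        have h1 : ‖(1 : E →L[ℂ] E)‖ ≤ 1 := by
          rw [ContinuousLinearMap.one_def]; exact ContinuousLinearMap.norm_id_le
        exact mul_le_mul_of_nonneg_left h1 hc0
    _ = n * ‖P‖ := by rw [mul_one]

lemma key_matrix_ineq (n : ℕ) (ι : Type) [Fintype ι]
    (x : ι → Matrix (Fin n) (Fin n) ℂ) :
    ‖Matrix.toEuclideanCLM (𝕜 := ℂ) (∑ i, (x i)ᴴ * x i)‖ ≤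
      n * ‖Matrix.toEuclideanCLM (𝕜 := ℂ) (∑ i, x i * (x i)ᴴ)‖ := by
  have h1 : Matrix.toEuclideanCLM (𝕜 := ℂ) (∑ i, (x i)ᴴ * x i) =
      ∑ i, star (Matrix.toEuclideanCLM (𝕜 := ℂ) (x i)) * Matrix.toEuclideanCLM (𝕜 := ℂ) (x i) := by
    rw [map_sum]
    exact Finset.sum_congr rfl fun i _ => by
      rw [_root_.map_mul, ← Matrix.star_eq_conjTranspose, map_star]
  have h2 : Matrix.toEuclideanCLM (𝕜 := ℂ) (∑ i, x i * (x i)ᴴ) =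
      ∑ i, Matrix.toEuclideanCLM (𝕜 := ℂ) (x i) * star (Matrix.toEuclideanCLM (𝕜 := ℂ) (x i)) := by
    rw [map_sum]
    exact Finset.sum_congr rfl fun i _ => by
      rw [_root_.map_mul, ← Matrix.star_eq_conjTranspose, map_star]
  rw [h1, h2]
  exact key_op_ineq n ι _

theorem eta_Mn_le_sqrt (n : ℕ) (hn : 1 ≤ n) (ι : Type) [Fintype ι] :
    (∀ x : ι → Matrix (Fin n) (Fin n) ℂ,
      ‖Matrix.toEuclideanCLM (𝕜 := ℂ) (∑ i, (x i)ᴴ * x i)‖ ≤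
        n * ‖Matrix.toEuclideanCLM (𝕜 := ℂ) (∑ i, x i * (x i)ᴴ)‖) ∧
    (∀ x : ι → Matrix (Fin n) (Fin n) ℂ,
      ‖Matrix.toEuclideanCLM (𝕜 := ℂ) (∑ i, (x i)ᴴ * x i)‖ ≤ 1 →
        Real.sqrt ‖Matrix.toEuclideanCLM (𝕜 := ℂ) (∑ i, x i * (x i)ᴴ)‖ ≤ Real.sqrt n) ∧
    (∀ x : ι → Matrix (Fin n) (Fin n) ℂ,
      ‖Matrix.toEuclideanCLM (𝕜 := ℂ) (∑ i, x i * (x i)ᴴ)‖ ≤ 1 →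
        Real.sqrt ‖Matrix.toEuclideanCLM (𝕜 := ℂ) (∑ i, (x i)ᴴ * x i)‖ ≤ Real.sqrt n) := by
  refine ⟨fun x => key_matrix_ineq n ι x, fun x hx => ?_, fun x hx => ?_⟩
  · have := key_matrix_ineq n ι (fun i => (x i)ᴴ)
    simp only [conjTranspose_conjTranspose] at this
    refine Real.sqrt_le_sqrt (this.trans ?_)
    calc (n : ℝ) * ‖Matrix.toEuclideanCLM (𝕜 := ℂ) (∑ i, (x i)ᴴ * x i)‖ ≤ n * 1 := by
          exact mul_le_mul_of_nonneg_left hx (by positivity)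
      _ = n := mul_one _
  · have := key_matrix_ineq n ι x
    refine Real.sqrt_le_sqrt (this.trans ?_)
    calc (n : ℝ) * ‖Matrix.toEuclideanCLM (𝕜 := ℂ) (∑ i, x i * (x i)ᴴ)‖ ≤ n * 1 :=
          mul_le_mul_of_nonneg_left hx (by positivity)
      _ = n := mul_one _
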